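/- Let m, n ∈ ℕ, m ≥ 2. For each matrix a = (a_i)_{i ∈ M(m,n)}, the index set M(m,n) = {1,…,n}^m can be written as a union of m subsets S_1,…,S_m such that for every k, max over j ∈ {1,…,n} of ∑_{i ∈ M(m,n), i_k = j, i ∈ S_k} |a_i| ≤ m‖a‖_{ℓ_{m/(m-1),∞}}. -/

import Mathlib

/-- The non-increasing rearrangement of a finite family of complex numbers:
`rearrF x k = inf {λ ≥ 0 : card {i : |x i| > λ} ≤ k}`, so that `x*_j = rearrF x (j-1)`. -/
noncomputable def rearrF {ι : Type*} [Fintype ι] (x : ι → ℂ) (k : ℕ) : ℝ :=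
  sInf {l : ℝ | 0 ≤ l ∧ Nat.card {i : ι // l < ‖x i‖} ≤ k}


open Finset

section aux
variable {ι : Type*} [Fintype ι]


lemma rearrF_nonempty (x : ι → ℂ) (k : ℕ) :
    {l : ℝ | 0 ≤ l ∧ Nat.card {i : ι // l < ‖x i‖} ≤ k}.Nonempty := by
  refine ⟨∑ i, ‖x i‖, Finset.sum_nonneg fun i _ => norm_nonneg _, ?_⟩
  have he : IsEmpty {i : ι // (∑ i', ‖x i'‖) < ‖x i‖} := by
    constructor
    rintro ⟨i, hi⟩
    exact absurd (Finset.single_le_sum (fun i' _ => norm_nonneg (x i')) (mem_univ i))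
      (not_le.2 hi)
  simp [Nat.card_of_isEmpty]

lemma rearrF_nonneg (x : ι → ℂ) (k : ℕ) : 0 ≤ rearrF x k :=
  Real.sInf_nonneg fun _ h => h.1

lemma le_rearrF {x : ι → ℂ} {i : ι} {t : ℕ}
    (h : t + 1 ≤ (univ.filter fun i' => ‖x i‖ ≤ ‖x i'‖).card) :
    ‖x i‖ ≤ rearrF x t := by
  apply le_csInf (rearrF_nonempty x t)
  rintro l ⟨hl0, hlcard⟩
  by_contra hlt
  push_neg at hlt
  have h2 : (univ.filter fun i' => ‖x i‖ ≤ ‖x i'‖).card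
      ≤ Nat.card {i' : ι // l < ‖x i'‖} := by
    rw [Nat.card_eq_fintype_card, Fintype.card_subtype]
    refine Finset.card_le_card fun i' hi' => ?_
    simp only [mem_filter, mem_univ, true_and] at hi' ⊢
    exact lt_of_lt_of_le hlt hi'
  omega

end aux

/-- Key analytic estimate: `∑_{t<T} (t+1)^{-(m-1)/m} ≤ m T^{1/m}`. -/
lemma sum_rpow_le (m : ℕ) (hm : 2 ≤ m) : ∀ T : ℕ,
    ∑ t ∈ range T, ((t : ℝ) + 1) ^ (-(((m : ℝ) - 1) / m)) ≤ (m : ℝ) * (T : ℝ) ^ ((1 : ℝ) / m) := by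
  have hm0 : (0:ℝ) < m := by positivity
  intro T
  induction T with
  | zero =>
    simp only [range_zero, sum_empty, Nat.cast_zero]
    rw [Real.zero_rpow (by positivity : (1:ℝ)/m ≠ 0)]
    simp
  | succ T ih =>
    rw [Finset.sum_range_succ]
    set x : ℝ := (T : ℝ) + 1 with hx
    have hx1 : (1:ℝ) ≤ x := by rw [hx]; have : (0:ℝ) ≤ (T:ℝ) := by positivity
                               linarith
    have hx0 : (0:ℝ) < x := by linarith
    have hm2 : (2:ℝ) ≤ (m:ℝ) := by exact_mod_cast hm
    have hmx1 : (1:ℝ) < (m:ℝ) * x := by nlinarith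
    have hinner : (0:ℝ) < 1 - 1/((m:ℝ)*x) := by
      rw [sub_pos, div_lt_one (by positivity)]; exact hmx1
    set y : ℝ := x ^ ((1:ℝ)/m) * (1 - 1/((m:ℝ)*x)) with hy
    have hy0 : 0 ≤ y := mul_nonneg (Real.rpow_nonneg hx0.le _) hinner.le
    have hxm : (x ^ ((1:ℝ)/m)) ^ m = x := by
      rw [← Real.rpow_natCast (x ^ ((1:ℝ)/m)) m, ← Real.rpow_mul hx0.le,
        one_div_mul_cancel (by positivity : (m:ℝ) ≠ 0), Real.rpow_one]
    have hym : x - 1 ≤ y ^ m := by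
      rw [hy, mul_pow, hxm]
      have hb := one_add_mul_le_pow (a := -(1/((m:ℝ)*x))) (by nlinarith) m
      have heq : 1 + (m:ℝ) * -(1/((m:ℝ)*x)) = 1 - 1/x := by
        field_simp
        ring
      have heq2 : (1 : ℝ) + -(1/((m:ℝ)*x)) = 1 - 1/((m:ℝ)*x) := by ring
      rw [heq, heq2] at hb
      have hxx : x * (1 - 1/x) = x - 1 := by field_simp
      calc x - 1 = x * (1 - 1/x) := hxx.symm
        _ ≤ x * (1 - 1/((m:ℝ)*x)) ^ m := by
            apply mul_le_mul_of_nonneg_left hb hx0.le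
    have hclaim : (x - 1) ^ ((1:ℝ)/m) ≤ y := by
      have h1 : ((x-1) ^ ((1:ℝ)/m)) ^ m = x - 1 := by
        rw [← Real.rpow_natCast _ m, ← Real.rpow_mul (by linarith),
          one_div_mul_cancel (by positivity : (m:ℝ) ≠ 0), Real.rpow_one]
      have h2 : ((x-1) ^ ((1:ℝ)/m)) ^ m ≤ y ^ m := by rw [h1]; exact hym
      exact le_of_pow_le_pow_left₀ (by omega) hy0 h2
    have hid : x ^ (-(((m:ℝ)-1)/m)) = x ^ ((1:ℝ)/m) / x := by
      rw [← Real.rpow_sub_one hx0.ne']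
      congr 1
      field_simp
      ring
    have hmy : (m:ℝ) * y = (m:ℝ) * x ^ ((1:ℝ)/m) - x ^ ((1:ℝ)/m) / x := by
      rw [hy]; field_simp
    have hfin : (m:ℝ) * (x-1) ^ ((1:ℝ)/m) ≤ (m:ℝ) * y :=
      mul_le_mul_of_nonneg_left hclaim hm0.le
    rw [hmy] at hfin
    have hTx : (T:ℝ) = x - 1 := by rw [hx]; ring
    rw [hTx] at ih
    rw [show (((T+1:ℕ)):ℝ) = x by push_cast [hx]; ring, hid]
    linarith

/-- Mass of any `T`-element set is at most `W ∑_{t<T} (t+1)^{-(m-1)/m}`. -/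
lemma mass_le (m : ℕ) {ι : Type*} [Fintype ι] [DecidableEq ι] (a : ι → ℂ) (W : ℝ)
    (hW : ∀ k : ℕ, ((k : ℝ) + 1) ^ (((m : ℝ) - 1) / m) * rearrF a k ≤ W) :
    ∀ (T : ℕ) (B : Finset ι), B.card = T →
      ∑ i ∈ B, ‖a i‖ ≤ W * ∑ t ∈ range T, ((t:ℝ)+1) ^ (-(((m:ℝ)-1)/m)) := by
  intro T
  induction T with
  | zero => intro B hB; rw [card_eq_zero] at hB; simp [hB]
  | succ T ih =>
    intro B hB
    obtain ⟨i0, hi0B, hmin⟩ := B.exists_min_image (fun i => ‖a i‖)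
      (by rw [← card_pos, hB]; omega)
    have hp : (0:ℝ) < ((T:ℝ)+1) ^ (((m:ℝ)-1)/m) :=
      Real.rpow_pos_of_pos (by positivity) _
    have hv : ‖a i0‖ * ((T:ℝ)+1) ^ (((m:ℝ)-1)/m) ≤ W := by
      have hsub : B ⊆ univ.filter fun i' => ‖a i0‖ ≤ ‖a i'‖ :=
        fun i hi => mem_filter.2 ⟨mem_univ _, hmin i hi⟩
      have hcard : T + 1 ≤ (univ.filter fun i' =>
          ‖a i0‖ ≤ ‖a i'‖).card := hB ▸ card_le_card hsub
      have h1 := le_rearrF hcard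
      have h2 := hW T
      calc ‖a i0‖ * ((T:ℝ)+1) ^ (((m:ℝ)-1)/m)
          ≤ rearrF a T * ((T:ℝ)+1) ^ (((m:ℝ)-1)/m) :=
            mul_le_mul_of_nonneg_right h1 hp.le
        _ = ((T:ℝ)+1) ^ (((m:ℝ)-1)/m) * rearrF a T := by ring
        _ ≤ W := h2
    have hWnn : 0 ≤ W := by
      have h := hW 0
      rw [show ((0:ℕ):ℝ) + 1 = 1 by norm_num, Real.one_rpow, one_mul] at h
      exact le_trans (rearrF_nonneg a 0) h
    have hv' : ‖a i0‖ ≤ W * ((T:ℝ)+1) ^ (-(((m:ℝ)-1)/m)) := by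
      rw [Real.rpow_neg (by positivity), mul_comm W]
      rw [← le_div_iff₀ hp] at hv
      rw [div_eq_inv_mul] at hv
      calc ‖a i0‖ ≤ (((T:ℝ)+1) ^ (((m:ℝ)-1)/m))⁻¹ * W := hv
        _ = (((T:ℝ)+1) ^ (((m:ℝ)-1)/m))⁻¹ * W := rfl
    have herase := ih (B.erase i0) (by rw [card_erase_of_mem hi0B, hB]; rfl)
    have hsplit : ∑ i ∈ B, ‖a i‖
        = ‖a i0‖ + ∑ i ∈ B.erase i0, ‖a i‖ :=
      (Finset.add_sum_erase B _ hi0B).symm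
    rw [hsplit, Finset.sum_range_succ, mul_add]
    have := add_le_add hv' herase
    linarith

variable {m n : ℕ}

def sliceLoad (x : (Fin m → Fin n) → Fin m → ℝ) (k : Fin m) (j : Fin n) : ℝ :=
  ∑ i ∈ univ.filter (fun i => i k = j), x i k

def Feas (v : (Fin m → Fin n) → ℝ) (W : ℝ) (x : (Fin m → Fin n) → Fin m → ℝ) : Prop :=
  (∀ i k, 0 ≤ x i k) ∧ (∀ i, ∑ k, x i k ≤ v i) ∧ (∀ k j, sliceLoad x k j ≤ W)

def itot (x : (Fin m → Fin n) → Fin m → ℝ) : ℝ := ∑ i, ∑ k, x i k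

def ReachN (x : (Fin m → Fin n) → Fin m → ℝ) (i₀ : Fin m → Fin n) : ℕ → Fin m × Fin n → Prop
  | 0 => fun s => ∃ k, s = (k, i₀ k)
  | (p+1) => fun s => ReachN x i₀ p s ∨
      ∃ i' k k', 0 < x i' k ∧ ReachN x i₀ p (k, i' k) ∧ s = (k', i' k')

lemma reach_repair {x y : (Fin m → Fin n) → Fin m → ℝ} {i₀ i' : Fin m → Fin n} {k : Fin m}
    (hagree : ∀ i'' κ, ¬(i'' = i' ∧ κ = k) → x i'' κ ≤ y i'' κ) :
    ∀ p s, ReachN x i₀ p s → ReachN y i₀ p s ∨ ReachN y i₀ p (k, i' k) := by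
  intro p
  induction p with
  | zero => intro s hs; exact Or.inl hs
  | succ p ih =>
    intro s hs
    rcases hs with hs | ⟨i'', κ, κ', hpos, hprev, rfl⟩
    · rcases ih s hs with h | h
      · exact Or.inl (Or.inl h)
      · exact Or.inr (Or.inl h)
    · rcases ih _ hprev with h | h
      · by_cases hc : i'' = i' ∧ κ = k
        · obtain ⟨rfl, rfl⟩ := hc
          exact Or.inr (Or.inl h)
        · exact Or.inl (Or.inr ⟨i'', κ, κ', lt_of_lt_of_le hpos (hagree _ _ hc), h, rfl⟩)
      · exact Or.inr (Or.inl h)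

/-- helper: sum over a slice of a one-point modification. -/
lemma sum_ite_point {m n : ℕ} (κ : Fin m) (j : Fin n) (i' : Fin m → Fin n)
    (P : Prop) [Decidable P] (c : ℝ) :
    ∑ i ∈ univ.filter (fun i => i κ = j), (if i = i' ∧ P then c else 0)
      = if P ∧ i' κ = j then c else 0 := by
  by_cases hP : P
  · simp only [hP, and_true, true_and]
    rw [Finset.sum_ite_eq' (univ.filter (fun i => i κ = j)) i' (fun _ => c)]
    simp only [mem_filter, mem_univ, true_and]
  · simp [hP]

lemma sum_fin_ite_point {m n : ℕ} (i : Fin m → Fin n) (i' : Fin m → Fin n) (k : Fin m) (c : ℝ) :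
    ∑ κ : Fin m, (if i = i' ∧ κ = k then c else 0) = if i = i' then c else 0 := by
  by_cases hi : i = i'
  · simp only [hi, true_and]
    rw [Finset.sum_ite_eq' univ k (fun _ => c)]
    simp
  · simp [hi]

lemma reach_full (v : (Fin m → Fin n) → ℝ) (W : ℝ) (i₀ : Fin m → Fin n) :
    ∀ (p : ℕ) (x : (Fin m → Fin n) → Fin m → ℝ), Feas v W x →
      (∀ y, Feas v W y → itot y ≤ itot x) → (∑ k, x i₀ k < v i₀) →
      ∀ s : Fin m × Fin n, ReachN x i₀ p s → W ≤ sliceLoad x s.1 s.2 := by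
  intro p
  induction p with
  | zero =>
    rintro x hx hopt hdef s ⟨k, rfl⟩
    by_contra hlt
    push_neg at hlt
    replace hlt : sliceLoad x k (i₀ k) < W := hlt
    set δ := min (W - sliceLoad x k (i₀ k)) (v i₀ - ∑ κ, x i₀ κ) with hδ
    have hδpos : 0 < δ := lt_min (by linarith) (by linarith)
    have hδ1 : δ ≤ W - sliceLoad x k (i₀ k) := min_le_left _ _
    have hδ2 : δ ≤ v i₀ - ∑ κ, x i₀ κ := min_le_right _ _
    set y : (Fin m → Fin n) → Fin m → ℝ :=
      fun i κ => x i κ + (if i = i₀ ∧ κ = k then δ else 0) with hy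
    have hload : ∀ κ j, sliceLoad y κ j
        = sliceLoad x κ j + (if κ = k ∧ i₀ κ = j then δ else 0) := by
      intro κ j
      simp only [sliceLoad, hy]
      rw [Finset.sum_add_distrib, sum_ite_point κ j i₀ (κ = k) δ]
    have hsum : ∀ i, ∑ κ, y i κ = (∑ κ, x i κ) + (if i = i₀ then δ else 0) := by
      intro i
      simp only [hy]
      rw [Finset.sum_add_distrib, sum_fin_ite_point i i₀ k δ]
    have hitot : itot y = itot x + δ := by
      calc itot y = ∑ i, ((∑ κ, x i κ) + (if i = i₀ then δ else 0)) :=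
            Finset.sum_congr rfl (fun i _ => hsum i)
        _ = (∑ i, ∑ κ, x i κ) + ∑ i, (if i = i₀ then δ else 0) := Finset.sum_add_distrib
        _ = itot x + δ := by
            rw [Finset.sum_ite_eq' univ i₀ (fun _ => δ)]
            simp [itot]
    have hyF : Feas v W y := by
      refine ⟨?_, ?_, ?_⟩
      · intro i κ
        simp only [hy]
        split_ifs with h1
        · linarith [hx.1 i κ]
        · simpa using hx.1 i κ
      · intro i
        rw [hsum i]
        split_ifs with h1
        · subst h1; linarith
        · simpa using hx.2.1 i
      · intro κ j
        rw [hload κ j]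
        split_ifs with h1
        · obtain ⟨rfl, rfl⟩ := h1
          linarith
        · simpa using hx.2.2 κ j
    have h := hopt y hyF
    rw [hitot] at h
    linarith
  | succ p ih =>
    rintro x hx hopt hdef s hs
    rcases hs with hs | ⟨i', k, k', hpos, hprev, rfl⟩
    · exact ih x hx hopt hdef s hs
    · by_cases hkk : k' = k
      · subst hkk
        exact ih x hx hopt hdef _ hprev
      · by_contra hlt
        push_neg at hlt
        replace hlt : sliceLoad x k' (i' k') < W := hlt
        set η := min (x i' k) (W - sliceLoad x k' (i' k')) with hη
        have hηpos : 0 < η := lt_min hpos (by linarith)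
        have hηle : η ≤ x i' k := min_le_left _ _
        have hηle2 : η ≤ W - sliceLoad x k' (i' k') := min_le_right _ _
        set y : (Fin m → Fin n) → Fin m → ℝ :=
          fun i κ => x i κ + (if i = i' ∧ κ = k then -η else 0)
            + (if i = i' ∧ κ = k' then η else 0) with hy
        have hload : ∀ κ j, sliceLoad y κ j = sliceLoad x κ j
            + (if κ = k ∧ i' κ = j then -η else 0) + (if κ = k' ∧ i' κ = j then η else 0) := by
          intro κ j
          simp only [sliceLoad, hy]
          rw [Finset.sum_add_distrib, Finset.sum_add_distrib,
            sum_ite_point κ j i' (κ = k) (-η), sum_ite_point κ j i' (κ = k') η]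
        have hsum : ∀ i, ∑ κ, y i κ = ∑ κ, x i κ := by
          intro i
          simp only [hy]
          rw [Finset.sum_add_distrib, Finset.sum_add_distrib,
            sum_fin_ite_point i i' k (-η), sum_fin_ite_point i i' k' η]
          by_cases h : i = i' <;> simp [h]
        have hitot : itot y = itot x := Finset.sum_congr rfl (fun i _ => hsum i)
        have hyF : Feas v W y := by
          refine ⟨?_, ?_, ?_⟩
          · intro i2 κ2
            simp only [hy]
            split_ifs with h1 h2 h2
            · exact absurd (h2.2.symm.trans h1.2) hkk
            · simp only [add_zero]
              have h3 : η ≤ x i2 κ2 := by rw [h1.1, h1.2]; exact hηle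
              linarith
            · simp only [add_zero]
              linarith [hx.1 i2 κ2]
            · simpa using hx.1 i2 κ2
          · intro i
            rw [hsum i]
            exact hx.2.1 i
          · intro κ2 j
            rw [hload κ2 j]
            split_ifs with h1 h2 h2
            · exact absurd (h2.1.symm.trans h1.1) hkk
            · simp only [add_zero]
              linarith [hx.2.2 κ2 j]
            · obtain ⟨hA, hB⟩ := h2
              subst hA
              subst hB
              simp only [add_zero]
              linarith
            · simpa using hx.2.2 κ2 j
        have hopt' : ∀ z, Feas v W z → itot z ≤ itot y := fun z hz => by
          rw [hitot]; exact hopt z hz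
        have hdef' : ∑ κ, y i₀ κ < v i₀ := by rw [hsum]; exact hdef
        have hagree : ∀ i'' κ, ¬(i'' = i' ∧ κ = k) → x i'' κ ≤ y i'' κ := by
          intro i'' κ hc
          simp only [hy, if_neg hc]
          split_ifs with h2
          · linarith
          · simp
        have hreach : ReachN y i₀ p (k, i' k) := by
          rcases reach_repair hagree p _ hprev with h | h <;> exact h
        have hW2 : W ≤ sliceLoad y k (i' k) := ih y hyF hopt' hdef' (k, i' k) hreach
        have hcomp : sliceLoad y k (i' k) = sliceLoad x k (i' k) - η := by
          rw [hload k (i' k), if_pos ⟨rfl, rfl⟩, if_neg (fun h => hkk h.1.symm)]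
          ring
        have hle := hx.2.2 k (i' k)
        rw [hcomp] at hW2
        linarith


/-- For each matrix `a` indexed by `M(m,n) = {1,…,n}^m` (with `m ≥ 2`), the index set
splits into a union of `m` subsets `S_1, …, S_m` such that for every `k` and every
`j ∈ {1,…,n}`, `∑_{i ∈ S_k, i_k = j} |a_i| ≤ m · W`, where `W` is any upper bound for
the weak quasi-norm `‖a‖_{ℓ_{m/(m-1),∞}} = sup_k k^{(m-1)/m} a*_k`. -/
theorem stmt4 (m n : ℕ) (hm : 2 ≤ m) (a : (Fin m → Fin n) → ℂ) (W : ℝ)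
    (hW : ∀ k : ℕ, ((k : ℝ) + 1) ^ (((m : ℝ) - 1) / m) * rearrF a k ≤ W) :
    ∃ S : Fin m → Finset (Fin m → Fin n),
      (∀ i : Fin m → Fin n, ∃ k : Fin m, i ∈ S k) ∧
      ∀ (k : Fin m) (j : Fin n),
        ∑ i ∈ (S k).filter (fun i => i k = j), ‖a i‖ ≤ (m : ℝ) * W := by
  classical
  set v : (Fin m → Fin n) → ℝ := fun i => ‖a i‖ with hv
  have hv0 : ∀ i, 0 ≤ v i := fun i => norm_nonneg _
  have hW0 : 0 ≤ W := by
    have h := hW 0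
    rw [show ((0:ℕ):ℝ) + 1 = 1 by norm_num, Real.one_rpow, one_mul] at h
    exact le_trans (rearrF_nonneg a 0) h
  set C : Set ((Fin m → Fin n) → Fin m → ℝ) := {x | Feas v W x} with hC
  have hCne : C.Nonempty := by
    refine ⟨fun _ _ => 0, ⟨fun i k => le_refl 0, fun i => by simpa using hv0 i, fun k j => ?_⟩⟩
    simpa [sliceLoad] using hW0
  have hev : ∀ (i : Fin m → Fin n) (k : Fin m),
      Continuous (fun x : (Fin m → Fin n) → Fin m → ℝ => x i k) :=
    fun i k => (continuous_apply k).comp (continuous_apply i)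
  have hCclosed : IsClosed C := by
    have e : C = (⋂ (i) (k), {x : (Fin m → Fin n) → Fin m → ℝ | 0 ≤ x i k})
        ∩ ((⋂ i, {x : (Fin m → Fin n) → Fin m → ℝ | ∑ k, x i k ≤ v i})
        ∩ (⋂ (k) (j), {x : (Fin m → Fin n) → Fin m → ℝ | sliceLoad x k j ≤ W})) := by
      ext x
      simp only [hC, Set.mem_setOf_eq, Set.mem_inter_iff, Set.mem_iInter, Feas]
    rw [e]
    refine IsClosed.inter ?_ (IsClosed.inter ?_ ?_)
    · exact isClosed_iInter fun i => isClosed_iInter fun k =>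
        isClosed_le continuous_const (hev i k)
    · exact isClosed_iInter fun i =>
        isClosed_le (continuous_finset_sum _ fun k _ => hev i k) continuous_const
    · refine isClosed_iInter fun k => isClosed_iInter fun j => ?_
      have : Continuous (fun x : (Fin m → Fin n) → Fin m → ℝ => sliceLoad x k j) := by
        unfold sliceLoad
        exact continuous_finset_sum _ fun i _ => hev i k
      exact isClosed_le this continuous_const
  have hCbdd : Bornology.IsBounded C := by
    have hr : 0 ≤ ∑ i, v i := Finset.sum_nonneg fun i _ => hv0 i
    apply Bornology.IsBounded.subset
      (Metric.isBounded_closedBall (x := (0 : (Fin m → Fin n) → Fin m → ℝ)) (r := ∑ i, v i))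
    intro x hx
    have hxF : Feas v W x := hx
    rw [Metric.mem_closedBall, dist_zero_right]
    rw [pi_norm_le_iff_of_nonneg hr]
    intro i
    rw [pi_norm_le_iff_of_nonneg hr]
    intro k
    rw [Real.norm_eq_abs, abs_le]
    constructor
    · linarith [hxF.1 i k]
    · calc x i k ≤ ∑ κ, x i κ := Finset.single_le_sum (fun κ _ => hxF.1 i κ) (mem_univ k)
        _ ≤ v i := hxF.2.1 i
        _ ≤ ∑ i', v i' := Finset.single_le_sum (fun i' _ => hv0 i') (mem_univ i)
  have hCcpt : IsCompact C := Metric.isCompact_of_isClosed_isBounded hCclosed hCbdd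
  have hcont : Continuous (itot (m := m) (n := n)) := by
    unfold itot
    exact continuous_finset_sum _ fun i _ => continuous_finset_sum _ fun k _ => hev i k
  obtain ⟨xs, hxsC, hxsmax⟩ := hCcpt.exists_isMaxOn hCne hcont.continuousOn
  have hxsF : Feas v W xs := hxsC
  have hopt : ∀ y, Feas v W y → itot y ≤ itot xs := fun y hy => hxsmax hy
  have hfull : ∀ i, ∑ k, xs i k = v i := by
    by_contra hcon
    push_neg at hcon
    obtain ⟨i₀, hi₀⟩ := hcon
    have hdef : ∑ k, xs i₀ k < v i₀ := lt_of_le_of_ne (hxsF.2.1 i₀) hi₀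
    set R : Finset (Fin m × Fin n) := univ.filter (fun s => ∃ p, ReachN xs i₀ p s) with hR
    have hRfull : ∀ s ∈ R, sliceLoad xs s.1 s.2 = W := by
      intro s hsR
      obtain ⟨p, hp⟩ := (mem_filter.1 hsR).2
      exact le_antisymm (hxsF.2.2 s.1 s.2) (reach_full v W i₀ p xs hxsF hopt hdef s hp)
    have hbase : ∀ k, (k, i₀ k) ∈ R := fun k => mem_filter.2 ⟨mem_univ _, ⟨0, ⟨k, rfl⟩⟩⟩
    have hclosure : ∀ i' k k', 0 < xs i' k → (k, i' k) ∈ R → (k', i' k') ∈ R := by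
      intro i' k k' hpos hmem
      obtain ⟨p, hp⟩ := (mem_filter.1 hmem).2
      exact mem_filter.2 ⟨mem_univ _, ⟨p+1, Or.inr ⟨i', k, k', hpos, hp, rfl⟩⟩⟩
    set Rk : Fin m → Finset (Fin n) := fun k => univ.filter (fun j => (k, j) ∈ R) with hRk
    have hmemRk : ∀ k j, j ∈ Rk k ↔ (k, j) ∈ R := by
      intro k j; rw [hRk]; simp
    set B : Finset (Fin m → Fin n) := univ.filter (fun i => ∀ k, i k ∈ Rk k) with hB
    have hi₀B : i₀ ∈ B := mem_filter.2 ⟨mem_univ _, fun k => (hmemRk _ _).2 (hbase k)⟩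
    have hcard1 : R.card = ∑ k, (Rk k).card := by
      have h1 : ∀ k, (Rk k).card = ∑ j : Fin n, if (k, j) ∈ R then 1 else 0 := by
        intro k
        rw [hRk]
        exact Finset.card_filter _ _
      calc R.card = ∑ _s ∈ R, 1 := Finset.card_eq_sum_ones R
        _ = ∑ s : Fin m × Fin n, if s ∈ R then 1 else 0 := by
            rw [Finset.sum_ite_mem, Finset.univ_inter]
        _ = ∑ k, ∑ j : Fin n, if (k, j) ∈ R then 1 else 0 := by rw [Fintype.sum_prod_type]
        _ = ∑ k, (Rk k).card := by
            exact Finset.sum_congr rfl fun k _ => (h1 k).symm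
    have hcard2 : B.card = ∏ k, (Rk k).card := by
      have e1 : B.card = Fintype.card {i : Fin m → Fin n // ∀ k, i k ∈ Rk k} := by
        rw [Fintype.card_subtype, hB]
      rw [e1, Fintype.card_congr (Equiv.subtypePiEquivPi (p := fun k (j : Fin n) => j ∈ Rk k)),
        Fintype.card_pi]
      exact Finset.prod_congr rfl fun k _ => Fintype.card_coe (Rk k)
    have hkey : W * R.card = ∑ i ∈ B, ∑ k, xs i k := by
      have h1 : ∑ s ∈ R, sliceLoad xs s.1 s.2 = W * R.card := by
        rw [Finset.sum_congr rfl hRfull, Finset.sum_const, nsmul_eq_mul, mul_comm]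
      rw [← h1]
      calc ∑ s ∈ R, sliceLoad xs s.1 s.2
          = ∑ s ∈ R, ∑ i, (if i s.1 = s.2 then xs i s.1 else 0) :=
            Finset.sum_congr rfl (fun s _ => by rw [sliceLoad, Finset.sum_filter])
        _ = ∑ i, ∑ s ∈ R, (if i s.1 = s.2 then xs i s.1 else 0) := Finset.sum_comm
        _ = ∑ i, ∑ k, (if (k, i k) ∈ R then xs i k else 0) := by
            apply Finset.sum_congr rfl
            intro i _
            calc ∑ s ∈ R, (if i s.1 = s.2 then xs i s.1 else 0)
                = ∑ s : Fin m × Fin n,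
                    if s ∈ R then (if i s.1 = s.2 then xs i s.1 else 0) else 0 := by
                  rw [Finset.sum_ite_mem, Finset.univ_inter]
              _ = ∑ k, ∑ j, if (k,j) ∈ R then (if i k = j then xs i k else 0) else 0 := by
                  rw [Fintype.sum_prod_type]
              _ = ∑ k, (if (k, i k) ∈ R then xs i k else 0) := by
                  apply Finset.sum_congr rfl
                  intro k _
                  have hj : ∀ j, (if (k,j) ∈ R then (if i k = j then xs i k else 0) else 0)
                      = if j = i k then (if (k, j) ∈ R then xs i k else 0) else 0 := by
                    intro j
                    by_cases hje : j = i k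
                    · subst hje
                      simp
                    · have : ¬ (i k = j) := fun h => hje h.symm
                      simp [hje, this]
                  rw [Finset.sum_congr rfl (fun j _ => hj j),
                    Finset.sum_ite_eq' univ (i k) (fun j => if (k, j) ∈ R then xs i k else 0)]
                  simp
        _ = ∑ i, (if i ∈ B then ∑ k, xs i k else 0) := by
            apply Finset.sum_congr rfl
            intro i _
            by_cases hiB : i ∈ B
            · rw [if_pos hiB]
              apply Finset.sum_congr rfl
              intro k _
              rw [if_pos ((hmemRk _ _).1 ((mem_filter.1 hiB).2 k))]
            · rw [if_neg hiB]
              apply Finset.sum_eq_zero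
              intro k _
              by_cases hkR : (k, i k) ∈ R
              · rw [if_pos hkR]
                by_contra hne
                have hpos : 0 < xs i k := lt_of_le_of_ne (hxsF.1 i k) (Ne.symm hne)
                exact hiB (mem_filter.2 ⟨mem_univ _,
                  fun k' => (hmemRk _ _).2 (hclosure i k k' hpos hkR)⟩)
              · rw [if_neg hkR]
        _ = ∑ i ∈ B, ∑ k, xs i k := by rw [Finset.sum_ite_mem, Finset.univ_inter]
    have hltB : ∑ i ∈ B, ∑ k, xs i k < ∑ i ∈ B, v i :=
      Finset.sum_lt_sum (fun i _ => hxsF.2.1 i) ⟨i₀, hi₀B, hdef⟩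
    have hmass : ∑ i ∈ B, v i ≤ W * ∑ t ∈ range B.card, ((t:ℝ)+1)^(-(((m:ℝ)-1)/m)) :=
      mass_le m a W hW B.card B rfl
    have hG := sum_rpow_le m hm B.card
    have hAMGM : (m:ℝ) * ((B.card:ℝ)) ^ ((1:ℝ)/m) ≤ ∑ k, ((Rk k).card : ℝ) := by
      have hw : ∑ _k : Fin m, (1:ℝ)/m = 1 := by
        rw [Finset.sum_const, card_univ, Fintype.card_fin, nsmul_eq_mul]
        field_simp
      have hz : ∀ k ∈ (univ : Finset (Fin m)), (0:ℝ) ≤ ((Rk k).card : ℝ) := fun k _ => by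
        positivity
      have h := Real.geom_mean_le_arith_mean_weighted univ (fun _ => (1:ℝ)/m)
        (fun k => ((Rk k).card : ℝ)) (fun k _ => by positivity) hw hz
      rw [Real.finset_prod_rpow univ _ hz _] at h
      have hprod : ((B.card : ℝ)) = ∏ k, ((Rk k).card : ℝ) := by
        rw [hcard2]; push_cast; rfl
      rw [hprod]
      rw [show (∑ k, ((1:ℝ)/m) * ((Rk k).card:ℝ)) = (1/m) * ∑ k, ((Rk k).card:ℝ) from
        (Finset.mul_sum _ _ _).symm] at h
      have hm0 : (0:ℝ) < m := by positivity
      calc (m:ℝ) * (∏ k, ((Rk k).card : ℝ)) ^ ((1:ℝ)/m)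
          ≤ (m:ℝ) * ((1/m) * ∑ k, ((Rk k).card:ℝ)) := mul_le_mul_of_nonneg_left h hm0.le
        _ = ∑ k, ((Rk k).card:ℝ) := by rw [← mul_assoc, mul_one_div_cancel hm0.ne', one_mul]
    have hsumcast : ∑ k, ((Rk k).card : ℝ) = (R.card : ℝ) := by rw [hcard1]; push_cast; rfl
    have hchain : ∑ i ∈ B, v i ≤ W * R.card := by
      calc ∑ i ∈ B, v i ≤ W * ∑ t ∈ range B.card, ((t:ℝ)+1)^(-(((m:ℝ)-1)/m)) := hmass
        _ ≤ W * ((m:ℝ) * (B.card:ℝ)^((1:ℝ)/m)) := mul_le_mul_of_nonneg_left hG hW0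
        _ ≤ W * (R.card:ℝ) := by
            apply mul_le_mul_of_nonneg_left _ hW0
            rw [← hsumcast]
            exact hAMGM
    linarith
  have hargmax : ∀ i, ∃ k : Fin m, ∀ k', xs i k' ≤ xs i k := by
    intro i
    obtain ⟨k, -, hk⟩ := Finset.exists_max_image univ (fun k => xs i k)
      ⟨(⟨0, by omega⟩ : Fin m), mem_univ _⟩
    exact ⟨k, fun k' => hk k' (mem_univ _)⟩
  choose K hK using hargmax
  refine ⟨fun k => univ.filter (fun i => K i = k),
    fun i => ⟨K i, mem_filter.2 ⟨mem_univ _, rfl⟩⟩, ?_⟩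
  intro k j
  have hstep : ∀ i ∈ (univ.filter (fun i => K i = k)).filter (fun i => i k = j),
      ‖a i‖ ≤ (m:ℝ) * xs i k := by
    intro i hi
    simp only [mem_filter, mem_univ, true_and] at hi
    obtain ⟨hKi, hik⟩ := hi
    have h1 : v i = ∑ κ, xs i κ := (hfull i).symm
    have h2 : ∑ κ, xs i κ ≤ ∑ _κ : Fin m, xs i k := by
      apply Finset.sum_le_sum
      intro κ _
      rw [← hKi]
      exact hK i κ
    have h3 : ∑ _κ : Fin m, xs i k = (m:ℝ) * xs i k := by
      rw [Finset.sum_const, card_univ, Fintype.card_fin, nsmul_eq_mul]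
    calc ‖a i‖ = v i := rfl
      _ ≤ (m:ℝ) * xs i k := by rw [h1, ← h3]; exact h2
  calc ∑ i ∈ (univ.filter (fun i => K i = k)).filter (fun i => i k = j), ‖a i‖
      ≤ ∑ i ∈ (univ.filter fun i => K i = k).filter (fun i => i k = j), (m:ℝ) * xs i k :=
        Finset.sum_le_sum hstep
    _ ≤ ∑ i ∈ univ.filter (fun i => i k = j), (m:ℝ) * xs i k := by
        apply Finset.sum_le_sum_of_subset_of_nonneg
        · intro i hi
          simp only [mem_filter, mem_univ, true_and] at hi ⊢
          exact hi.2
        · intro i _ _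
          have := hxsF.1 i k
          positivity
    _ = (m:ℝ) * sliceLoad xs k j := by rw [sliceLoad, Finset.mul_sum]
    _ ≤ (m:ℝ) * W := mul_le_mul_of_nonneg_left (hxsF.2.2 k j) (by positivity)
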